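/- Suppose log(1/Z) ≤ n/16, Z ≤ 1/e, and n ≥ 8e. Then for every interval I ⊂ ℝ of length at most 2 and every x ∈ I, one has 4·|g'(s)| ≤ (1/n)·x·g(x) + Z for every s ∈ I at which g is differentiable. -/

import Mathlib

/-- The Gauss error function `erf(x) = (2/√π) ∫₀ˣ e^{−s²} ds`. -/
noncomputable def erf (x : ℝ) : ℝ :=
  (2 / Real.sqrt Real.pi) * ∫ s in (0:ℝ)..x, Real.exp (-s ^ 2)

/-- The unclipped confidence function `g̃(x) = √(n/8) · Z · erf(x/√(8n)) · e^{x²/(16n)}`. -/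
noncomputable def gtilde (n Z x : ℝ) : ℝ :=
  Real.sqrt (n / 8) * Z * erf (x / Real.sqrt (8 * n)) * Real.exp (x ^ 2 / (16 * n))

/-- The confidence function `g(x)`, the projection of `g̃(x)` onto `[0,1]`. -/
noncomputable def gconf (n Z x : ℝ) : ℝ := min (max (gtilde n Z x) 0) 1

/-! ### auxiliary lemmas -/

lemma contE : Continuous (fun s : ℝ => Real.exp (-s ^ 2)) :=
  Real.continuous_exp.comp (continuous_pow 2).neg

lemma erf_hasDerivAt (x : ℝ) :
    HasDerivAt erf (2 / Real.sqrt Real.pi * Real.exp (-x ^ 2)) x :=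
  ((contE.integral_hasStrictDerivAt 0 x).hasDerivAt).const_mul (2 / Real.sqrt Real.pi)

lemma erf_zero : erf 0 = 0 := by simp [erf]

lemma sqrt_pi_pos : 0 < Real.sqrt Real.pi := Real.sqrt_pos.2 Real.pi_pos

lemma intE_nonneg {x : ℝ} (hx : 0 ≤ x) : 0 ≤ ∫ s in (0:ℝ)..x, Real.exp (-s ^ 2) :=
  intervalIntegral.integral_nonneg hx (fun _ _ => (Real.exp_pos _).le)

lemma erf_nonneg {x : ℝ} (hx : 0 ≤ x) : 0 ≤ erf x :=
  mul_nonneg (by positivity) (intE_nonneg hx)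

lemma erf_nonpos {x : ℝ} (hx : x ≤ 0) : erf x ≤ 0 := by
  have h : ∫ s in (0:ℝ)..x, Real.exp (-s ^ 2) ≤ 0 := by
    rw [intervalIntegral.integral_symm x 0]
    simp only [neg_nonpos]
    exact intervalIntegral.integral_nonneg hx (fun u _ => (Real.exp_pos _).le)
  exact mul_nonpos_of_nonneg_of_nonpos (by positivity) h

lemma intbl (a b : ℝ) :
    IntervalIntegrable (fun s : ℝ => Real.exp (-s ^ 2)) MeasureTheory.volume a b :=
  contE.intervalIntegrable a b

lemma erf_le {x : ℝ} (hx : 0 ≤ x) : erf x ≤ 2 / Real.sqrt Real.pi * x := by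
  have h : ∫ s in (0:ℝ)..x, Real.exp (-s ^ 2) ≤ ∫ s in (0:ℝ)..x, (1:ℝ) := by
    apply intervalIntegral.integral_mono_on hx (intbl 0 x) intervalIntegrable_const
    intro u _
    exact Real.exp_le_one_iff.2 (by nlinarith [sq_nonneg u])
  simp only [intervalIntegral.integral_const, smul_eq_mul, mul_one, sub_zero] at h
  unfold erf
  exact mul_le_mul_of_nonneg_left h (by positivity)

lemma erf_scale {l t : ℝ} (hl0 : 0 < l) (hl1 : l ≤ 1) (ht : 0 ≤ t) :
    l * erf t ≤ erf (l * t) := by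
  unfold erf
  rw [show (∫ s in (0:ℝ)..l*t, Real.exp (-s ^ 2))
      = l * ∫ v in (0:ℝ)..t, Real.exp (-(l*v) ^ 2) from ?_]
  · have h : ∫ v in (0:ℝ)..t, Real.exp (-v ^ 2) ≤ ∫ v in (0:ℝ)..t, Real.exp (-(l*v) ^ 2) := by
      apply intervalIntegral.integral_mono_on ht (intbl 0 t)
      · exact (Real.continuous_exp.comp ((continuous_const.mul continuous_id).pow 2).neg).intervalIntegrable 0 t
      · intro u hu
        apply Real.exp_le_exp.2
        have hl2 : l^2 ≤ 1 := by nlinarith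
        have : (l*u)^2 ≤ u^2 := by nlinarith [sq_nonneg u]
        linarith
    have h2 : 0 ≤ 2 / Real.sqrt Real.pi := by positivity
    have := mul_le_mul_of_nonneg_left h (mul_nonneg h2 hl0.le)
    nlinarith
  · have := intervalIntegral.integral_comp_mul_left (fun s => Real.exp (-s^2)) (ne_of_gt hl0) (a := 0) (b := t)
    rw [mul_zero] at this
    rw [this]
    simp [smul_eq_mul]
    ring_nf
    rw [mul_comm]
    congr 1
    field_simp

lemma erf_ge_of_one_le {t : ℝ} (ht : 1 ≤ t) : 4 / (3 * Real.sqrt Real.pi) ≤ erf t := by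
  have h1 : (2:ℝ)/3 ≤ ∫ s in (0:ℝ)..1, Real.exp (-s ^ 2) := by
    have h : ∫ s in (0:ℝ)..1, (1 - s^2) ≤ ∫ s in (0:ℝ)..1, Real.exp (-s ^ 2) := by
      apply intervalIntegral.integral_mono_on zero_le_one ?_ (intbl 0 1)
      · intro u _
        have := Real.add_one_le_exp (-u^2)
        linarith
      · exact ((continuous_const.sub (continuous_pow 2))).intervalIntegrable 0 1
    have : (∫ s in (0:ℝ)..1, (1 - s^2)) = 2/3 := by
      rw [intervalIntegral.integral_sub intervalIntegrable_const ((continuous_pow 2).intervalIntegrable 0 1)]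
      simp [integral_pow]
      norm_num
    linarith
  have h2 : ∫ s in (0:ℝ)..1, Real.exp (-s ^ 2) ≤ ∫ s in (0:ℝ)..t, Real.exp (-s ^ 2) := by
    rw [← intervalIntegral.integral_add_adjacent_intervals (intbl 0 1) (intbl 1 t)]
    have h3 : 0 ≤ ∫ s in (1:ℝ)..t, Real.exp (-s ^ 2) :=
      intervalIntegral.integral_nonneg ht (fun u _ => (Real.exp_pos _).le)
    linarith
  unfold erf
  rw [show (4:ℝ) / (3 * Real.sqrt Real.pi) = 2 / Real.sqrt Real.pi * (2/3) by
    field_simp; ring]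
  have h2' : 0 < 2 / Real.sqrt Real.pi := by positivity
  nlinarith

lemma sqrt8n_pos {n : ℝ} (hn : 0 < n) : 0 < Real.sqrt (8 * n) :=
  Real.sqrt_pos.2 (by linarith)

lemma sqrt_prod {n : ℝ} (hn : 0 < n) : Real.sqrt (n / 8) * Real.sqrt (8 * n) = n := by
  rw [← Real.sqrt_mul (by positivity), show n / 8 * (8 * n) = n ^ 2 by ring]
  exact Real.sqrt_sq hn.le

lemma sqrt_div8 {n : ℝ} (hn : 0 < n) :
    Real.sqrt (n / 8) / Real.sqrt (8 * n) = 1 / 8 := by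
  have hc := sqrt8n_pos hn
  have hsq : Real.sqrt (8 * n) * Real.sqrt (8 * n) = 8 * n :=
    Real.mul_self_sqrt (by linarith)
  rw [div_eq_div_iff hc.ne' (by norm_num : (8:ℝ) ≠ 0)]
  have h0 : (8 * Real.sqrt (n / 8) - Real.sqrt (8 * n)) * Real.sqrt (8 * n) = 0 := by
    nlinarith [sqrt_prod hn, hsq]
  rcases mul_eq_zero.1 h0 with h | h
  · linarith
  · exact absurd h hc.ne'

lemma gtilde_hasDerivAt (n Z : ℝ) (hn : 0 < n) (x : ℝ) :
    HasDerivAt (gtilde n Z)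
      (Z * Real.exp (-(x ^ 2) / (16 * n)) / (4 * Real.sqrt Real.pi)
        + x * gtilde n Z x / (8 * n)) x := by
  have hc : (0:ℝ) < Real.sqrt (8 * n) := sqrt8n_pos hn
  have hdiv := sqrt_div8 hn
  have hexp2 : (x / Real.sqrt (8 * n)) ^ 2 = x ^ 2 / (8 * n) := by
    rw [div_pow, Real.sq_sqrt (by linarith : (0:ℝ) ≤ 8 * n)]
  have h1 : HasDerivAt (fun y : ℝ => erf (y / Real.sqrt (8 * n)))
      (2 / Real.sqrt Real.pi * Real.exp (-(x / Real.sqrt (8 * n)) ^ 2) / Real.sqrt (8 * n)) x := by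
    have := (erf_hasDerivAt (x / Real.sqrt (8 * n))).comp x
      ((hasDerivAt_id x).div_const (Real.sqrt (8 * n)))
    simpa [Function.comp_def, div_eq_mul_inv, mul_comm, mul_assoc, mul_left_comm] using this
  have h2 : HasDerivAt (fun y : ℝ => Real.exp (y ^ 2 / (16 * n)))
      (Real.exp (x ^ 2 / (16 * n)) * (2 * x / (16 * n))) x := by
    have hx2 : HasDerivAt (fun y : ℝ => y ^ 2 / (16 * n)) (2 * x / (16 * n)) x := by
      simpa using ((hasDerivAt_pow 2 x).div_const (16 * n))
    simpa using hx2.exp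
  have h3 := (h1.const_mul (Real.sqrt (n / 8) * Z)).mul h2
  have hA : Real.exp (x ^ 2 / (16 * n)) ≠ 0 := Real.exp_ne_zero _
  have hsplit : Real.exp (-(x ^ 2 / (8 * n)))
      = Real.exp (-(x ^ 2) / (16 * n)) / Real.exp (x ^ 2 / (16 * n)) := by
    rw [← Real.exp_sub]; congr 1; field_simp; ring
  have key : Real.sqrt (n / 8) * (2 / Real.sqrt Real.pi * Real.exp (-(x ^ 2 / (8 * n)))
        / Real.sqrt (8 * n)) * Real.exp (x ^ 2 / (16 * n))
      = Real.exp (-(x ^ 2) / (16 * n)) / (4 * Real.sqrt Real.pi) := by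
    rw [hsplit]
    calc Real.sqrt (n / 8) * (2 / Real.sqrt Real.pi
          * (Real.exp (-(x ^ 2) / (16 * n)) / Real.exp (x ^ 2 / (16 * n)))
          / Real.sqrt (8 * n)) * Real.exp (x ^ 2 / (16 * n))
        = (Real.sqrt (n / 8) / Real.sqrt (8 * n)) * (2 / Real.sqrt Real.pi)
            * (Real.exp (-(x ^ 2) / (16 * n)) / Real.exp (x ^ 2 / (16 * n))
              * Real.exp (x ^ 2 / (16 * n))) := by ring
      _ = Real.exp (-(x ^ 2) / (16 * n)) / (4 * Real.sqrt Real.pi) := by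
          rw [hdiv, div_mul_cancel₀ _ hA]; ring
  convert h3 using 1
  · rfl
  · rfl
  · rfl
  simp only [gtilde]
  rw [hexp2]
  linear_combination (-Z) * key

lemma gtilde_nonneg {n Z : ℝ} (hZ : 0 ≤ Z) {x : ℝ} (hx : 0 ≤ x) :
    0 ≤ gtilde n Z x := by
  have h1 : 0 ≤ erf (x / Real.sqrt (8 * n)) := erf_nonneg (by positivity)
  exact mul_nonneg (mul_nonneg (mul_nonneg (Real.sqrt_nonneg _) hZ) h1) (Real.exp_pos _).le

lemma gtilde_nonpos {n Z : ℝ} (hZ : 0 ≤ Z) {x : ℝ} (hx : x ≤ 0) :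
    gtilde n Z x ≤ 0 := by
  have h1 : erf (x / Real.sqrt (8 * n)) ≤ 0 :=
    erf_nonpos (div_nonpos_iff.2 (Or.inr ⟨hx, Real.sqrt_nonneg _⟩))
  exact mul_nonpos_of_nonpos_of_nonneg
    (mul_nonpos_of_nonneg_of_nonpos (mul_nonneg (Real.sqrt_nonneg _) hZ) h1)
    (Real.exp_pos _).le

lemma gtilde_zero (n Z : ℝ) : gtilde n Z 0 = 0 := by
  simp [gtilde, erf_zero]

lemma gtilde_strictMono {n Z : ℝ} (hn : 0 < n) (hZ : 0 < Z) :
    StrictMono (gtilde n Z) := by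
  apply strictMono_of_deriv_pos
  intro x
  rw [(gtilde_hasDerivAt n Z hn x).deriv]
  have h1 : 0 < Z * Real.exp (-(x ^ 2) / (16 * n)) / (4 * Real.sqrt Real.pi) := by
    have := sqrt_pi_pos; positivity
  have h2 : 0 ≤ x * gtilde n Z x := by
    rcases le_or_gt 0 x with h | h
    · exact mul_nonneg h (gtilde_nonneg hZ.le h)
    · nlinarith [gtilde_nonpos (n := n) hZ.le h.le]
  have h3 : 0 ≤ x * gtilde n Z x / (8 * n) := by positivity
  linarith

lemma gconf_nonneg (n Z x : ℝ) : 0 ≤ gconf n Z x :=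
  le_min (le_max_right _ _) zero_le_one

lemma gconf_le_one (n Z x : ℝ) : gconf n Z x ≤ 1 := min_le_right _ _

lemma gconf_of_nonpos {n Z x : ℝ} (h : gtilde n Z x ≤ 0) : gconf n Z x = 0 := by
  simp [gconf, max_eq_right h]

lemma gconf_eq {n Z x : ℝ} (h0 : 0 ≤ gtilde n Z x) (h1 : gtilde n Z x ≤ 1) :
    gconf n Z x = gtilde n Z x := by
  simp [gconf, max_eq_left h0, min_eq_left h1]

lemma gconf_mono {n Z : ℝ} (hn : 0 < n) (hZ : 0 < Z) : Monotone (gconf n Z) :=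
  fun u v huv => min_le_min
    (max_le_max ((gtilde_strictMono hn hZ).monotone huv) le_rfl) le_rfl

lemma x_gconf_nonneg {n Z : ℝ} (hZ : 0 ≤ Z) (x : ℝ) : 0 ≤ x * gconf n Z x := by
  rcases le_or_gt 0 x with h | h
  · exact mul_nonneg h (gconf_nonneg n Z x)
  · rw [gconf_of_nonpos (gtilde_nonpos hZ h.le)]; simp

lemma poly_lemma {s n : ℝ} (h10 : 10 ≤ s) (hsn : s ≤ n) (hn : 21 ≤ n) :
    2 * n * s ^ 2 ≤ (4 * n - s) * (s - 2) ^ 2 := by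
  rcases le_or_gt s 12 with h12 | h12
  · nlinarith [mul_nonneg (sub_nonneg.2 h10) (sub_nonneg.2 h12), sq_nonneg (s - 10),
      sq_nonneg (s - 12), mul_nonneg (sub_nonneg.2 hn) (sub_nonneg.2 h10)]
  · nlinarith [mul_nonneg (sub_nonneg.2 hsn) (by nlinarith : (0:ℝ) ≤ s ^ 2 - 8 * s + 8),
      mul_nonneg (mul_nonneg (by linarith : (0:ℝ) ≤ s) (by linarith : (0:ℝ) ≤ s))
        (by linarith : (0:ℝ) ≤ s - 12)]

lemma sqrt_pi_gt : (1.772:ℝ) ≤ Real.sqrt Real.pi := by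
  rw [show (1.772:ℝ) = Real.sqrt (1.772 ^ 2) by rw [Real.sqrt_sq (by norm_num)]]
  apply Real.sqrt_le_sqrt
  nlinarith [Real.pi_gt_d6]

lemma en_bound {n : ℝ} (hn : n ≥ 8 * Real.exp 1) : 21.746 ≤ n := by
  nlinarith [Real.exp_one_gt_d9]

lemma exp_bound_num {q : ℝ} (hq : q ≤ 0.28741) : Real.exp q ≤ 1.3331 := by
  have h1 : Real.exp q ≤ Real.exp 0.28741 := Real.exp_le_exp.2 hq
  have habs : |(0.28741:ℝ)| = 0.28741 := abs_of_nonneg (by norm_num)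
  have h2 := Real.exp_bound (x := (0.28741:ℝ)) (by rw [habs]; norm_num) (n := 4) (by norm_num)
  have h3 : |Real.exp 0.28741 - ∑ i ∈ Finset.range 4, (0.28741:ℝ) ^ i / i.factorial|
      ≤ |(0.28741:ℝ)| ^ 4 * ((4:ℕ).succ / ((4:ℕ).factorial * 4)) := h2
  rw [abs_le] at h3
  have h4 : (∑ i ∈ Finset.range 4, (0.28741:ℝ) ^ i / i.factorial)
      = 1 + 0.28741 + 0.28741 ^ 2 / 2 + 0.28741 ^ 3 / 6 := by
    norm_num [Finset.sum_range_succ, Nat.factorial]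
  rw [h4, habs] at h3
  have h5 := h3.2
  norm_num [Nat.factorial] at h5 ⊢
  linarith
lemma exp_arg_bound {s x n : ℝ} (hn : 0 < n) (h10 : 10 < s) (hsx2 : s - 2 ≤ x) :
    (s ^ 2 - x ^ 2) / (16 * n) ≤ s / (4 * n) := by
  rw [div_le_div_iff₀ (by linarith) (by linarith)]
  have h1 : (0:ℝ) ≤ 4 * s - 4 - (s ^ 2 - x ^ 2) := by
    nlinarith [mul_nonneg (by linarith : (0:ℝ) ≤ x - (s - 2)) (by linarith : (0:ℝ) ≤ x + (s - 2))]
  nlinarith [mul_nonneg h1 (by linarith : (0:ℝ) ≤ 4 * n)]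

lemma key2_poly {s x n : ℝ} (hpoly : 2 * n * s ^ 2 ≤ (4 * n - s) * (s - 2) ^ 2)
    (hx2 : (s - 2) ^ 2 ≤ x ^ 2) (ha4 : 0 < 4 * n - s) :
    s ^ 2 * (4 * n) ≤ 2 * x ^ 2 * (4 * n - s) := by
  nlinarith [mul_le_mul_of_nonneg_left hx2 ha4.le]


set_option maxHeartbeats 1000000 in
/-- **Lemma (derivative bound for the confidence function over short segments).** -/
theorem gconf_deriv_bound
    (n Z : ℝ) (hn0 : 0 < n) (hZ0 : 0 < Z)
    (hlog : Real.log (1 / Z) ≤ n / 16) (hZ : Z ≤ 1 / Real.exp 1)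
    (hn : n ≥ 8 * Real.exp 1)
    (U : ℝ) (hUpos : 0 < U) (hUdef : gtilde n Z U = 1)
    (hUuniq : ∀ y, 0 < y → gtilde n Z y = 1 → y = U)
    (a b : ℝ) (hab : a ≤ b) (hlen : b - a ≤ 2)
    (x : ℝ) (hx : x ∈ Set.Icc a b)
    (s : ℝ) (hs : s ∈ Set.Icc a b)
    (hdiff : DifferentiableAt ℝ (gconf n Z) s) :
    4 * |deriv (gconf n Z) s| ≤ (1 / n) * (x * gconf n Z x) + Z := by
  have SM := gtilde_strictMono hn0 hZ0
  have hn21 : (21.746:ℝ) ≤ n := en_bound hn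
  have hxg : 0 ≤ x * gconf n Z x := x_gconf_nonneg hZ0.le x
  have hpi : 0 < Real.sqrt Real.pi := sqrt_pi_pos
  have hsp : (1.772:ℝ) ≤ Real.sqrt Real.pi := sqrt_pi_gt
  have hRHS : Z ≤ (1 / n) * (x * gconf n Z x) + Z := by
    have h0 : 0 ≤ (1 / n) * (x * gconf n Z x) := by positivity
    linarith
  rcases le_or_gt s 0 with hs0 | hs0
  · -- left clamp region : derivative vanishes
    have hzero : deriv (gconf n Z) s = 0 := by
      have hud : UniqueDiffWithinAt ℝ (Set.Iic s) s := uniqueDiffOn_Iic s s Set.self_mem_Iic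
      have h1 : derivWithin (gconf n Z) (Set.Iic s) s = deriv (gconf n Z) s :=
        hdiff.derivWithin hud
      have h2 : derivWithin (gconf n Z) (Set.Iic s) s
          = derivWithin (fun _ => (0:ℝ)) (Set.Iic s) s := by
        apply derivWithin_congr
        · intro t ht
          exact gconf_of_nonpos (gtilde_nonpos hZ0.le (le_trans ht hs0))
        · exact gconf_of_nonpos (gtilde_nonpos hZ0.le hs0)
      have h3 : derivWithin (fun _ => (0:ℝ)) (Set.Iic s) s = 0 :=
        (hasDerivWithinAt_const _ _ _).derivWithin hud
      rw [← h1, h2, h3]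
    rw [hzero]
    simp only [abs_zero, mul_zero]
    exact le_trans hZ0.le hRHS
  rcases le_or_gt U s with hsU | hsU
  · -- right clamp region : derivative vanishes
    have hone : ∀ t ∈ Set.Ici s, gconf n Z t = 1 := by
      intro t ht
      have h1 : (1:ℝ) ≤ gtilde n Z t := by
        rw [← hUdef]; exact SM.monotone (le_trans hsU ht)
      simp [gconf, max_eq_left (le_trans zero_le_one h1), min_eq_right h1]
    have hzero : deriv (gconf n Z) s = 0 := by
      have hud : UniqueDiffWithinAt ℝ (Set.Ici s) s := uniqueDiffOn_Ici s s Set.self_mem_Ici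
      have h1 : derivWithin (gconf n Z) (Set.Ici s) s = deriv (gconf n Z) s :=
        hdiff.derivWithin hud
      have h2 : derivWithin (gconf n Z) (Set.Ici s) s
          = derivWithin (fun _ => (1:ℝ)) (Set.Ici s) s :=
        derivWithin_congr hone (hone s Set.self_mem_Ici)
      have h3 : derivWithin (fun _ => (1:ℝ)) (Set.Ici s) s = 0 :=
        (hasDerivWithinAt_const _ _ _).derivWithin hud
      rw [← h1, h2, h3]
    rw [hzero]
    simp only [abs_zero, mul_zero]
    exact le_trans hZ0.le hRHS
  -- main case : 0 < s < U
  have hgs_pos : 0 < gtilde n Z s := by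
    have h := SM hs0; rwa [gtilde_zero] at h
  have hgs_lt1 : gtilde n Z s < 1 := by
    rw [← hUdef]; exact SM hsU
  have hder : deriv (gconf n Z) s
      = Z * Real.exp (-(s ^ 2) / (16 * n)) / (4 * Real.sqrt Real.pi)
        + s * gtilde n Z s / (8 * n) := by
    have heq : gconf n Z =ᶠ[nhds s] gtilde n Z := by
      filter_upwards [Ioo_mem_nhds hs0 hsU] with t ht
      have h0 := SM ht.1
      rw [gtilde_zero] at h0
      have h1 : gtilde n Z t ≤ 1 := by rw [← hUdef]; exact (SM ht.2).le
      exact gconf_eq h0.le h1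
    rw [heq.deriv_eq, (gtilde_hasDerivAt n Z hn0 s).deriv]
  have hDpos : 0 < Z * Real.exp (-(s ^ 2) / (16 * n)) / (4 * Real.sqrt Real.pi)
      + s * gtilde n Z s / (8 * n) := by
    have t1 : 0 < Z * Real.exp (-(s ^ 2) / (16 * n)) / (4 * Real.sqrt Real.pi) := by positivity
    have t2 : 0 < s * gtilde n Z s / (8 * n) :=
      div_pos (mul_pos hs0 hgs_pos) (by linarith)
    linarith
  rw [hder, abs_of_pos hDpos]
  have hE1 : Real.exp (-(s ^ 2) / (16 * n)) ≤ 1 := by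
    apply Real.exp_le_one_iff.2
    apply div_nonpos_iff.2
    exact Or.inr ⟨neg_nonpos.2 (sq_nonneg s), by linarith⟩
  have hq1 : Z * Real.exp (-(s ^ 2) / (16 * n)) / Real.sqrt Real.pi ≤ Z / Real.sqrt Real.pi :=
    (div_le_div_iff_of_pos_right hpi).2 (by nlinarith)
  have hZpi : 0 ≤ Z - Z / Real.sqrt Real.pi := by
    have h : Z / Real.sqrt Real.pi ≤ Z := by
      rw [div_le_iff₀ hpi]; nlinarith
    linarith
  suffices hred : s * gtilde n Z s / (2 * n)
      ≤ (1 / n) * (x * gconf n Z x) + (Z - Z / Real.sqrt Real.pi) by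
    have e1 : 4 * (Z * Real.exp (-(s ^ 2) / (16 * n)) / (4 * Real.sqrt Real.pi)
        + s * gtilde n Z s / (8 * n))
        = Z * Real.exp (-(s ^ 2) / (16 * n)) / Real.sqrt Real.pi
          + s * gtilde n Z s / (2 * n) := by ring
    linarith
  rcases le_or_gt s x with hsx | hxs
  · -- x to the right of s : monotonicity
    have hgs_eq : gconf n Z s = gtilde n Z s := gconf_eq hgs_pos.le hgs_lt1.le
    have h1 : s * gtilde n Z s ≤ x * gconf n Z x := by
      rw [← hgs_eq]
      exact mul_le_mul hsx (gconf_mono hn0 hZ0 hsx) (gconf_nonneg n Z s) (by linarith)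
    have h2 : s * gtilde n Z s / (2 * n) ≤ (x * gconf n Z x) / (2 * n) :=
      (div_le_div_iff_of_pos_right (by linarith)).2 h1
    have h3 : (x * gconf n Z x) / (2 * n) ≤ (1 / n) * (x * gconf n Z x) := by
      rw [show (1 / n) * (x * gconf n Z x) = (x * gconf n Z x) / n by ring,
        div_le_div_iff₀ (by linarith) hn0]
      nlinarith
    linarith
  have hsx2 : s - 2 ≤ x := by
    have h1 := hs.2; have h2 := hx.1; linarith
  rcases le_or_gt s 10 with hs10 | hs10
  · -- small s : crude bound suffices
    have hcpos := sqrt8n_pos hn0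
    have herfb := erf_le (show 0 ≤ s / Real.sqrt (8 * n) by positivity)
    have hgle : gtilde n Z s
        ≤ Z * s * Real.exp (s ^ 2 / (16 * n)) / (4 * Real.sqrt Real.pi) := by
      unfold gtilde
      calc Real.sqrt (n / 8) * Z * erf (s / Real.sqrt (8 * n)) * Real.exp (s ^ 2 / (16 * n))
          ≤ Real.sqrt (n / 8) * Z * (2 / Real.sqrt Real.pi * (s / Real.sqrt (8 * n)))
              * Real.exp (s ^ 2 / (16 * n)) := by
            apply mul_le_mul_of_nonneg_right _ (Real.exp_pos _).le
            exact mul_le_mul_of_nonneg_left herfb (by positivity)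
        _ = (Real.sqrt (n / 8) / Real.sqrt (8 * n))
              * (2 * Z * s * Real.exp (s ^ 2 / (16 * n)) / Real.sqrt Real.pi) := by ring
        _ = Z * s * Real.exp (s ^ 2 / (16 * n)) / (4 * Real.sqrt Real.pi) := by
            rw [sqrt_div8 hn0]; ring
    have hE : Real.exp (s ^ 2 / (16 * n)) ≤ 1.3331 := by
      apply exp_bound_num
      rw [div_le_iff₀ (by linarith : (0:ℝ) < 16 * n)]
      nlinarith
    have hs100 : s ^ 2 ≤ 100 := by nlinarith
    have hl : s ^ 2 * Real.exp (s ^ 2 / (16 * n)) ≤ 133.31 := by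
      nlinarith [(Real.exp_pos (s ^ 2 / (16 * n))).le]
    have h3 : s ^ 2 * Real.exp (s ^ 2 / (16 * n)) ≤ 8 * n * (Real.sqrt Real.pi - 1) := by
      nlinarith [mul_nonneg (sub_nonneg.2 hn21) (sub_nonneg.2 hsp)]
    have h1 : s * gtilde n Z s
        ≤ Z * (s ^ 2 * Real.exp (s ^ 2 / (16 * n))) / (4 * Real.sqrt Real.pi) := by
      calc s * gtilde n Z s
          ≤ s * (Z * s * Real.exp (s ^ 2 / (16 * n)) / (4 * Real.sqrt Real.pi)) :=
            mul_le_mul_of_nonneg_left hgle hs0.le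
        _ = Z * (s ^ 2 * Real.exp (s ^ 2 / (16 * n))) / (4 * Real.sqrt Real.pi) := by ring
    have h4 : Z * (s ^ 2 * Real.exp (s ^ 2 / (16 * n))) / (4 * Real.sqrt Real.pi)
        ≤ Z * (8 * n * (Real.sqrt Real.pi - 1)) / (4 * Real.sqrt Real.pi) :=
      (div_le_div_iff_of_pos_right (by positivity)).2 (mul_le_mul_of_nonneg_left h3 hZ0.le)
    have h5 : Z * (8 * n * (Real.sqrt Real.pi - 1)) / (4 * Real.sqrt Real.pi)
        = (Z - Z / Real.sqrt Real.pi) * (2 * n) := by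
      field_simp
      ring
    have h6 : s * gtilde n Z s / (2 * n) ≤ Z - Z / Real.sqrt Real.pi := by
      rw [div_le_iff₀ (by linarith : (0:ℝ) < 2 * n)]
      calc s * gtilde n Z s
          ≤ Z * (s ^ 2 * Real.exp (s ^ 2 / (16 * n))) / (4 * Real.sqrt Real.pi) := h1
        _ ≤ Z * (8 * n * (Real.sqrt Real.pi - 1)) / (4 * Real.sqrt Real.pi) := h4
        _ = (Z - Z / Real.sqrt Real.pi) * (2 * n) := h5
    have h7 : 0 ≤ (1 / n) * (x * gconf n Z x) := by positivity
    linarith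
  · -- large s : comparison with g at x
    -- first : U ≤ n
    have hZlow : Real.exp (-(n / 16)) ≤ Z := by
      have h1 : (1:ℝ) / Z ≤ Real.exp (n / 16) := by
        have h2 := Real.exp_le_exp.2 hlog
        rwa [Real.exp_log (by positivity)] at h2
      have h1' : 1 ≤ Real.exp (n / 16) * Z := (div_le_iff₀ hZ0).1 h1
      have hm : Real.exp (-(n / 16)) * Real.exp (n / 16) = 1 := by
        rw [← Real.exp_add]; simp
      nlinarith [Real.exp_pos (n / 16), Real.exp_pos (-(n / 16))]
    have hcpos := sqrt8n_pos hn0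
    have hnd : n / Real.sqrt (8 * n) = Real.sqrt (n / 8) :=
      ((eq_div_iff hcpos.ne').2 (sqrt_prod hn0)).symm
    have hn16 : n ^ 2 / (16 * n) = n / 16 := by field_simp
    have hsq1 : 1 ≤ Real.sqrt (n / 8) := by
      rw [show (1:ℝ) = Real.sqrt 1 by simp]
      exact Real.sqrt_le_sqrt (by linarith)
    have herf1 : 4 / (3 * Real.sqrt Real.pi) ≤ erf (Real.sqrt (n / 8)) :=
      erf_ge_of_one_le hsq1
    have hsqrt2n : 3 * Real.sqrt Real.pi ≤ 4 * Real.sqrt (n / 8) := by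
      have h9 : Real.sqrt (9 * Real.pi) ≤ Real.sqrt (16 * (n / 8)) := by
        apply Real.sqrt_le_sqrt
        nlinarith [Real.pi_lt_d2]
      rwa [Real.sqrt_mul (by norm_num) Real.pi, Real.sqrt_mul (by norm_num) (n / 8),
        show Real.sqrt 9 = 3 by
          rw [show (9:ℝ) = 3 ^ 2 by norm_num, Real.sqrt_sq (by norm_num)],
        show Real.sqrt 16 = 4 by
          rw [show (16:ℝ) = 4 ^ 2 by norm_num, Real.sqrt_sq (by norm_num)]] at h9
    have hg1 : 1 ≤ gtilde n Z n := by
      have hmul1 : Real.exp (-(n / 16)) * Real.exp (n / 16) = 1 := by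
        rw [← Real.exp_add]; simp
      have step1 : (1:ℝ) ≤ Real.sqrt (n / 8) * (4 / (3 * Real.sqrt Real.pi)) := by
        rw [show Real.sqrt (n / 8) * (4 / (3 * Real.sqrt Real.pi))
            = (4 * Real.sqrt (n / 8)) / (3 * Real.sqrt Real.pi) by ring,
          le_div_iff₀ (by positivity)]
        linarith
      calc (1:ℝ) ≤ Real.sqrt (n / 8) * (4 / (3 * Real.sqrt Real.pi)) := step1
        _ = Real.sqrt (n / 8) * Real.exp (-(n / 16)) * (4 / (3 * Real.sqrt Real.pi))
              * Real.exp (n / 16) := by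
            rw [show Real.sqrt (n / 8) * Real.exp (-(n / 16)) * (4 / (3 * Real.sqrt Real.pi))
                * Real.exp (n / 16)
                = Real.sqrt (n / 8) * (4 / (3 * Real.sqrt Real.pi))
                  * (Real.exp (-(n / 16)) * Real.exp (n / 16)) by ring, hmul1, mul_one]
        _ ≤ Real.sqrt (n / 8) * Z * erf (Real.sqrt (n / 8)) * Real.exp (n / 16) := by
            gcongr <;>
              first
                | exact hZlow
                | exact herf1
                | exact le_trans (by positivity : (0:ℝ) ≤ 4 / (3 * Real.sqrt Real.pi)) herf1
                | positivity
        _ = gtilde n Z n := by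
            simp only [gtilde]
            rw [hnd, hn16]
    have hUn : U ≤ n := by
      by_contra hcon
      push_neg at hcon
      have h := SM hcon
      rw [hUdef] at h
      linarith
    have hsn : s ≤ n := le_trans hsU.le hUn
    have hx8 : 8 < x := by linarith
    have hxU : x < U := lt_trans hxs hsU
    have hgx_eq : gconf n Z x = gtilde n Z x := by
      apply gconf_eq
      · have h := SM (show (0:ℝ) < x by linarith)
        rw [gtilde_zero] at h; exact h.le
      · rw [← hUdef]; exact (SM hxU).le
    have herf : (x / s) * erf (s / Real.sqrt (8 * n)) ≤ erf (x / Real.sqrt (8 * n)) := by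
      have h := erf_scale (l := x / s) (t := s / Real.sqrt (8 * n))
        (div_pos (by linarith) hs0) (by rw [div_le_one hs0]; linarith) (by positivity)
      rwa [show x / s * (s / Real.sqrt (8 * n)) = x / Real.sqrt (8 * n) by
        field_simp] at h
    have ha4 : (0:ℝ) < 4 * n - s := by linarith
    have hx2ge : (s - 2) ^ 2 ≤ x ^ 2 := by
      have := pow_le_pow_left₀ (by linarith : (0:ℝ) ≤ s - 2) hsx2 2
      simpa using this
    have hexp : Real.exp (s ^ 2 / (16 * n))
        ≤ Real.exp (x ^ 2 / (16 * n)) * (4 * n / (4 * n - s)) := by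
      have hqne : -(s / (4 * n)) ≠ 0 := by
        have hq : 0 < s / (4 * n) := div_pos hs0 (by linarith)
        exact ne_of_lt (neg_lt_zero.2 hq)
      have hb : 1 - s / (4 * n) < Real.exp (-(s / (4 * n))) := by
        have h := Real.add_one_lt_exp hqne
        linarith
      have hm : Real.exp (-(s / (4 * n))) * Real.exp (s / (4 * n)) = 1 := by
        rw [← Real.exp_add]; simp
      have h44 := mul_lt_mul_of_pos_right hb (Real.exp_pos (s / (4 * n)))
      have h45 : (1 - s / (4 * n)) * Real.exp (s / (4 * n)) < 1 := by
        linarith [h44, hm]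
      have h46 := mul_lt_mul_of_pos_right h45 (show (0:ℝ) < 4 * n by linarith)
      have hid : (1 - s / (4 * n)) * (4 * n) = 4 * n - s := by field_simp
      have h47 : (1 - s / (4 * n)) * Real.exp (s / (4 * n)) * (4 * n)
          = (4 * n - s) * Real.exp (s / (4 * n)) := by
        rw [mul_right_comm, hid]
      have hE4 : Real.exp (s / (4 * n)) * (4 * n - s) < 4 * n := by
        rw [h47] at h46; linarith
      have hc2 : Real.exp (s / (4 * n)) ≤ 4 * n / (4 * n - s) := by
        rw [le_div_iff₀ ha4]; linarith
      have hd2 : Real.exp ((s ^ 2 - x ^ 2) / (16 * n)) ≤ Real.exp (s / (4 * n)) :=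
        Real.exp_le_exp.2 (exp_arg_bound hn0 hs10 hsx2)
      calc Real.exp (s ^ 2 / (16 * n))
          = Real.exp (x ^ 2 / (16 * n)) * Real.exp ((s ^ 2 - x ^ 2) / (16 * n)) := by
            rw [← Real.exp_add]; congr 1; field_simp; ring
        _ ≤ Real.exp (x ^ 2 / (16 * n)) * (4 * n / (4 * n - s)) :=
            mul_le_mul_of_nonneg_left (le_trans hd2 hc2) (Real.exp_pos _).le
    have hpoly := poly_lemma hs10.le hsn (by linarith)
    have key2 : s ^ 2 * Real.exp (s ^ 2 / (16 * n))
        ≤ 2 * x ^ 2 * Real.exp (x ^ 2 / (16 * n)) := by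
      calc s ^ 2 * Real.exp (s ^ 2 / (16 * n))
          ≤ s ^ 2 * (Real.exp (x ^ 2 / (16 * n)) * (4 * n / (4 * n - s))) :=
            mul_le_mul_of_nonneg_left hexp (sq_nonneg s)
        _ = (s ^ 2 * (4 * n) / (4 * n - s)) * Real.exp (x ^ 2 / (16 * n)) := by ring
        _ ≤ (2 * x ^ 2) * Real.exp (x ^ 2 / (16 * n)) := by
            apply mul_le_mul_of_nonneg_right _ (Real.exp_pos _).le
            rw [div_le_iff₀ ha4]
            exact key2_poly hpoly hx2ge ha4
    have herfs : 0 ≤ erf (s / Real.sqrt (8 * n)) := erf_nonneg (by positivity)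
    have hgx_ge : (x / s) * (Real.sqrt (n / 8) * Z * erf (s / Real.sqrt (8 * n)))
        * Real.exp (x ^ 2 / (16 * n)) ≤ gtilde n Z x := by
      have h1 : (x / s) * erf (s / Real.sqrt (8 * n)) * (Real.sqrt (n / 8) * Z)
          * Real.exp (x ^ 2 / (16 * n))
          ≤ erf (x / Real.sqrt (8 * n)) * (Real.sqrt (n / 8) * Z)
            * Real.exp (x ^ 2 / (16 * n)) := by
        apply mul_le_mul_of_nonneg_right _ (Real.exp_pos _).le
        exact mul_le_mul_of_nonneg_right herf (by positivity)
      calc (x / s) * (Real.sqrt (n / 8) * Z * erf (s / Real.sqrt (8 * n)))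
            * Real.exp (x ^ 2 / (16 * n))
          = (x / s) * erf (s / Real.sqrt (8 * n)) * (Real.sqrt (n / 8) * Z)
            * Real.exp (x ^ 2 / (16 * n)) := by ring
        _ ≤ erf (x / Real.sqrt (8 * n)) * (Real.sqrt (n / 8) * Z)
            * Real.exp (x ^ 2 / (16 * n)) := h1
        _ = gtilde n Z x := by simp only [gtilde]; ring
    have key3 : s * gtilde n Z s ≤ 2 * x * gtilde n Z x := by
      have hAns : 0 ≤ Real.sqrt (n / 8) * Z * erf (s / Real.sqrt (8 * n)) / s :=
        div_nonneg (mul_nonneg (mul_nonneg (Real.sqrt_nonneg _) hZ0.le) herfs) hs0.le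
      calc s * gtilde n Z s
          = (Real.sqrt (n / 8) * Z * erf (s / Real.sqrt (8 * n)) / s)
            * (s ^ 2 * Real.exp (s ^ 2 / (16 * n))) := by
            simp only [gtilde]; field_simp
        _ ≤ (Real.sqrt (n / 8) * Z * erf (s / Real.sqrt (8 * n)) / s)
            * (2 * x ^ 2 * Real.exp (x ^ 2 / (16 * n))) :=
            mul_le_mul_of_nonneg_left key2 hAns
        _ = (2 * x) * ((x / s) * (Real.sqrt (n / 8) * Z * erf (s / Real.sqrt (8 * n)))
            * Real.exp (x ^ 2 / (16 * n))) := by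
            field_simp
        _ ≤ (2 * x) * gtilde n Z x :=
            mul_le_mul_of_nonneg_left hgx_ge (by linarith)
    have h6 : s * gtilde n Z s / (2 * n) ≤ (1 / n) * (x * gconf n Z x) := by
      rw [hgx_eq, div_le_iff₀ (by linarith : (0:ℝ) < 2 * n)]
      have heq2 : (1 / n) * (x * gtilde n Z x) * (2 * n) = 2 * x * gtilde n Z x := by
        field_simp
      linarith [key3, heq2]
    linarith [h6, hZpi]
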